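/- Let ρ_AB = Σᵢ qᵢ |ψᵢ⟩⟨ψᵢ| be a separable bipartite state decomposed into product pure states, and let |Ψ⟩_{ABC} be any purification of ρ_AB. Then for local unitaries U_A (on A) and V_B (on B): T(U_A ρ_AB U_A†, ρ_AB) ≤ T(U_A|Ψ⟩_{ABC}, V_B|Ψ⟩_{ABC}) = √(1 − |⟨Ψ|V_B†U_A|Ψ⟩|²). -/

import Mathlib

open Matrix Kronecker
open scoped ComplexOrder

/-- Trace distance `T(ρ,σ) = ½ Tr √((ρ−σ)†(ρ−σ))`. -/
noncomputable def traceDist {n : ℕ} (ρ σ : Matrix (Fin n) (Fin n) ℂ) : ℝ :=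
  (1/2) * ((Matrix.posSemidef_conjTranspose_mul_self (ρ - σ)).1.eigenvectorUnitary.1 *
    diagonal (((↑) : ℝ → ℂ) ∘ (fun x : ℝ => √x) ∘ (Matrix.posSemidef_conjTranspose_mul_self (ρ - σ)).1.eigenvalues) *
    (star (Matrix.posSemidef_conjTranspose_mul_self (ρ - σ)).1.eigenvectorUnitary : Matrix (Fin n) (Fin n) ℂ)).trace.re

set_option linter.unusedSectionVars false

namespace Stmt17Aux

open Complex

noncomputable def tdSqrt {N : ℕ} (X : Matrix (Fin N) (Fin N) ℂ) : Matrix (Fin N) (Fin N) ℂ :=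
  (Matrix.posSemidef_conjTranspose_mul_self X).1.eigenvectorUnitary.1 *
    diagonal (((↑) : ℝ → ℂ) ∘ (fun x : ℝ => √x) ∘ (Matrix.posSemidef_conjTranspose_mul_self X).1.eigenvalues) *
    (star (Matrix.posSemidef_conjTranspose_mul_self X).1.eigenvectorUnitary : Matrix (Fin N) (Fin N) ℂ)

section
open scoped MatrixOrder

lemma tdSqrt_eq_of_sq_eq {N : ℕ} {X B : Matrix (Fin N) (Fin N) ℂ} (hB : B.PosSemidef)
    (hsq : B ^ 2 = Xᴴ * X) : B = tdSqrt X := by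
  have hX := Matrix.posSemidef_conjTranspose_mul_self X
  have h1 : tdSqrt X = cfc Real.sqrt (Xᴴ * X) := by
    rw [hX.1.cfc_eq, IsHermitian.cfc, Unitary.conjStarAlgAut_apply]
    rfl
  rw [h1, ← cfcₙ_eq_cfc, ← CFC.sqrt_eq_real_sqrt _ hX.nonneg,
    CFC.sqrt_unique (by rw [← pow_two, hsq]) hB.nonneg]

end


variable {ι κ : Type*} [Fintype ι] [Fintype κ]

lemma dot_self_re (x : ι → ℂ) : ∑ j, ‖x j‖ ^ 2 = (star x ⬝ᵥ x).re := by
  simp [dotProduct, Complex.re_sum, Complex.sq_norm, Complex.normSq_apply]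

lemma cs_abs_dot (x y : ι → ℂ) :
    ‖star x ⬝ᵥ y‖ ≤ ∑ j, ‖x j‖ * ‖y j‖ := by
  refine (norm_sum_le _ _).trans_eq ?_
  exact Finset.sum_congr rfl fun j _ => by simp [norm_mul]

lemma abs_dot_le_one (x y : ι → ℂ) (hx : star x ⬝ᵥ x = 1) (hy : star y ⬝ᵥ y = 1) :
    ‖star x ⬝ᵥ y‖ ≤ 1 := by
  refine (cs_abs_dot x y).trans ?_
  have h1 : ∑ j, ‖x j‖ ^ 2 = 1 := by rw [dot_self_re, hx]; simp
  have h2 : ∑ j, ‖y j‖ ^ 2 = 1 := by rw [dot_self_re, hy]; simp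
  have := Finset.sum_mul_sq_le_sq_mul_sq Finset.univ (fun j => ‖x j‖)
    (fun j => ‖y j‖)
  rw [h1, h2, mul_one] at this
  nlinarith [Finset.sum_nonneg (fun j (_ : j ∈ Finset.univ) =>
    mul_nonneg (norm_nonneg (x j)) (norm_nonneg (y j)))]

lemma unitary_dot [DecidableEq ι] {P : Matrix ι ι ℂ} (hP : Pᴴ * P = 1) (x y : ι → ℂ) :
    star (P *ᵥ x) ⬝ᵥ (P *ᵥ y) = star x ⬝ᵥ y := by
  rw [Matrix.star_mulVec, dotProduct_mulVec, Matrix.vecMul_vecMul, hP, Matrix.vecMul_one]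

lemma outer_conj (P : Matrix ι ι ℂ) (x : ι → ℂ) :
    P * Matrix.vecMulVec x (star x) * Pᴴ = Matrix.vecMulVec (P *ᵥ x) (star (P *ᵥ x)) := by
  ext p r
  simp only [Matrix.mul_apply, Matrix.vecMulVec_apply, Matrix.conjTranspose_apply,
    Matrix.mulVec, dotProduct, Pi.star_apply, Finset.sum_mul, Finset.mul_sum,
    star_sum, star_mul']
  exact Finset.sum_congr rfl fun k _ => Finset.sum_congr rfl fun j _ => by ring

lemma vecMulVec_herm (x : ι → ℂ) :
    (Matrix.vecMulVec x (star x))ᴴ = Matrix.vecMulVec x (star x) := by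
  ext p r
  simp [Matrix.conjTranspose_apply, Matrix.vecMulVec_apply, mul_comm]

lemma dot_factor (x x' : ι → ℂ) (y y' : κ → ℂ) :
    (star fun p : ι × κ => x p.1 * y p.2) ⬝ᵥ (fun p : ι × κ => x' p.1 * y' p.2)
      = (star x ⬝ᵥ x') * (star y ⬝ᵥ y') := by
  simp only [dotProduct, Pi.star_apply, star_mul', Fintype.sum_prod_type,
    Finset.sum_mul, Finset.mul_sum]
  rw [Finset.sum_comm]
  exact Finset.sum_congr rfl fun s _ => Finset.sum_congr rfl fun t _ => by ring

lemma kron_one_mulVec [DecidableEq κ] (A : Matrix ι ι ℂ) (w : ι × κ → ℂ) (s : ι) (t : κ) :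
    ((A ⊗ₖ (1 : Matrix κ κ ℂ)) *ᵥ w) (s, t) = ∑ s', A s s' * w (s', t) := by
  simp [Matrix.mulVec, dotProduct, Fintype.sum_prod_type, Matrix.one_apply,
    ite_mul, mul_ite, Finset.sum_ite_eq, Finset.sum_ite_eq']

lemma one_kron_mulVec [DecidableEq ι] (B : Matrix κ κ ℂ) (w : ι × κ → ℂ) (s : ι) (t : κ) :
    (((1 : Matrix ι ι ℂ) ⊗ₖ B) *ᵥ w) (s, t) = ∑ t', B t t' * w (s, t') := by
  simp [Matrix.mulVec, dotProduct, Fintype.sum_prod_type, Matrix.one_apply,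
    ite_mul, mul_ite, Finset.sum_ite_eq, Finset.sum_ite_eq']

lemma pure_bound (a b : ι → ℝ) (ha : ∀ j, 0 ≤ a j) (hb : ∀ j, 0 ≤ b j)
    (ha2 : ∑ j, a j ^ 2 = 1) (hb2 : ∑ j, b j ^ 2 = 1) (c : ℝ) (hc0 : 0 ≤ c)
    (hc : c ≤ ∑ j, a j * b j) :
    ∑ j, |a j ^ 2 - b j ^ 2| ≤ 2 * Real.sqrt (1 - c ^ 2) := by
  set s := ∑ j, a j * b j with hs
  have hs0 : 0 ≤ s := Finset.sum_nonneg fun j _ => mul_nonneg (ha j) (hb j)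
  have hcs2 : s ^ 2 ≤ 1 := by
    have := Finset.sum_mul_sq_le_sq_mul_sq Finset.univ a b
    rw [ha2, hb2, mul_one] at this
    exact this
  have hs1 : s ≤ 1 := by nlinarith
  have hc1 : c ≤ 1 := hc.trans hs1
  have key : (∑ j, |a j ^ 2 - b j ^ 2|) ^ 2 ≤ 4 * (1 - s ^ 2) := by
    have heq : ∀ j, |a j ^ 2 - b j ^ 2| = (a j + b j) * |a j - b j| := by
      intro j
      rw [show a j ^ 2 - b j ^ 2 = (a j + b j) * (a j - b j) by ring, abs_mul,
        _root_.abs_of_nonneg (show (0:ℝ) ≤ a j + b j from add_nonneg (ha j) (hb j))]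
    have hCS := Finset.sum_mul_sq_le_sq_mul_sq Finset.univ (fun j => a j + b j)
      (fun j => |a j - b j|)
    have hsq : ∀ j, |a j - b j| ^ 2 = (a j - b j) ^ 2 := fun j => sq_abs _
    simp only [heq, hsq] at hCS ⊢
    have e1 : ∑ j, (a j + b j) ^ 2 = 2 + 2 * s := by
      have h : ∀ j, (a j + b j) ^ 2 = a j ^ 2 + b j ^ 2 + 2 * (a j * b j) := fun j => by ring
      simp only [h, Finset.sum_add_distrib, ha2, hb2, ← Finset.mul_sum, ← hs]
      ring
    have e2 : ∑ j, (a j - b j) ^ 2 = 2 - 2 * s := by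
      have h : ∀ j, (a j - b j) ^ 2 = a j ^ 2 + b j ^ 2 - 2 * (a j * b j) := fun j => by ring
      simp only [h, Finset.sum_sub_distrib, Finset.sum_add_distrib, ha2, hb2,
        ← Finset.mul_sum, ← hs]
      ring
    calc (∑ j, (a j + b j) * |a j - b j|) ^ 2
        ≤ (∑ j, (a j + b j) ^ 2) * ∑ j, (a j - b j) ^ 2 := by
          simpa only [hsq] using hCS
      _ = (2 + 2 * s) * (2 - 2 * s) := by rw [e1, e2]
      _ = 4 * (1 - s ^ 2) := by ring
  have hnn : 0 ≤ ∑ j, |a j ^ 2 - b j ^ 2| := Finset.sum_nonneg fun j _ => abs_nonneg _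
  have h2 : ∑ j, |a j ^ 2 - b j ^ 2| ≤ Real.sqrt (4 * (1 - s ^ 2)) := by
    rw [Real.le_sqrt hnn (by nlinarith)]
    exact key
  refine h2.trans ?_
  rw [show (4 : ℝ) * (1 - s ^ 2) = 2 ^ 2 * (1 - s ^ 2) by ring,
    Real.sqrt_mul (by positivity), Real.sqrt_sq (by norm_num)]
  have : Real.sqrt (1 - s ^ 2) ≤ Real.sqrt (1 - c ^ 2) := by
    apply Real.sqrt_le_sqrt; nlinarith
  linarith

lemma jensen_bound {m : ℕ} (q x : Fin m → ℝ) (hq : ∀ i, 0 ≤ q i) (hqs : ∑ i, q i = 1)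
    (hx0 : ∀ i, 0 ≤ x i) (hx1 : ∀ i, x i ≤ 1) (t : ℝ) (ht0 : 0 ≤ t)
    (ht : t ≤ ∑ i, q i * x i) :
    ∑ i, q i * Real.sqrt (1 - x i ^ 2) ≤ Real.sqrt (1 - t ^ 2) := by
  set Q := ∑ i, q i * Real.sqrt (1 - x i ^ 2) with hQ
  have hQ0 : 0 ≤ Q := Finset.sum_nonneg fun i _ => mul_nonneg (hq i) (Real.sqrt_nonneg _)
  have hQ2 : Q ^ 2 ≤ 1 - ∑ i, q i * x i ^ 2 := by
    have hCS := Finset.sum_mul_sq_le_sq_mul_sq Finset.univ (fun i => Real.sqrt (q i))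
      (fun i => Real.sqrt (q i) * Real.sqrt (1 - x i ^ 2))
    have e1 : ∀ i, Real.sqrt (q i) * (Real.sqrt (q i) * Real.sqrt (1 - x i ^ 2))
        = q i * Real.sqrt (1 - x i ^ 2) := fun i => by
      rw [← mul_assoc, Real.mul_self_sqrt (hq i)]
    have e2 : ∀ i, Real.sqrt (q i) ^ 2 = q i := fun i => Real.sq_sqrt (hq i)
    have e3 : ∀ i, (Real.sqrt (q i) * Real.sqrt (1 - x i ^ 2)) ^ 2 = q i * (1 - x i ^ 2) :=
      fun i => by
        rw [mul_pow, Real.sq_sqrt (hq i), Real.sq_sqrt (by nlinarith [hx0 i, hx1 i])]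
    simp only [e1, e2, e3, hqs, one_mul] at hCS
    calc Q ^ 2 ≤ ∑ i, q i * (1 - x i ^ 2) := hCS
      _ = 1 - ∑ i, q i * x i ^ 2 := by
          simp only [mul_sub, mul_one, Finset.sum_sub_distrib, hqs]
  have hP2 : (∑ i, q i * x i) ^ 2 ≤ ∑ i, q i * x i ^ 2 := by
    have hCS := Finset.sum_mul_sq_le_sq_mul_sq Finset.univ (fun i => Real.sqrt (q i))
      (fun i => Real.sqrt (q i) * x i)
    have e1 : ∀ i, Real.sqrt (q i) * (Real.sqrt (q i) * x i) = q i * x i := fun i => by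
      rw [← mul_assoc, Real.mul_self_sqrt (hq i)]
    have e2 : ∀ i, Real.sqrt (q i) ^ 2 = q i := fun i => Real.sq_sqrt (hq i)
    have e3 : ∀ i, (Real.sqrt (q i) * x i) ^ 2 = q i * x i ^ 2 := fun i => by
      rw [mul_pow, Real.sq_sqrt (hq i)]
    simpa only [e1, e2, e3, hqs, one_mul] using hCS
  have hP0 : 0 ≤ ∑ i, q i * x i := Finset.sum_nonneg fun i _ => mul_nonneg (hq i) (hx0 i)
  have ht2 : t ^ 2 ≤ (∑ i, q i * x i) ^ 2 := by nlinarith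
  rw [Real.le_sqrt hQ0 (by nlinarith)]
  nlinarith



lemma trace_norm_eq {N : ℕ} {ι : Type*} [Fintype ι] [DecidableEq ι]
    (M : Matrix ι ι ℂ) (hM : M.IsHermitian) (e : Fin N ≃ ι) :
    (tdSqrt (M.submatrix e e)).trace.re
      = ∑ j, |hM.eigenvalues j| := by
  classical
  set W : Matrix ι ι ℂ := (hM.eigenvectorUnitary : Matrix ι ι ℂ) with hWdef
  have hW1 : Wᴴ * W = 1 := by
    rw [← Matrix.star_eq_conjTranspose]
    exact Unitary.coe_star_mul_self hM.eigenvectorUnitary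
  have conj_sq : ∀ d : ι → ℂ, (W * Matrix.diagonal d * Wᴴ) * (W * Matrix.diagonal d * Wᴴ)
      = W * Matrix.diagonal (fun j => d j * d j) * Wᴴ := by
    intro d
    have h1 : (W * Matrix.diagonal d * Wᴴ) * (W * Matrix.diagonal d * Wᴴ)
        = W * Matrix.diagonal d * ((Wᴴ * W) * (Matrix.diagonal d * Wᴴ)) := by
      simp only [Matrix.mul_assoc]
    rw [h1, hW1, Matrix.one_mul, ← Matrix.mul_assoc, Matrix.mul_assoc W,
      Matrix.diagonal_mul_diagonal]
  set S : Matrix ι ι ℂ := W * Matrix.diagonal (fun j => ((|hM.eigenvalues j| : ℝ) : ℂ)) * Wᴴ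
    with hSdef
  have hSpsd : S.PosSemidef := by
    apply Matrix.PosSemidef.mul_mul_conjTranspose_same
    refine Matrix.posSemidef_diagonal_iff.mpr fun j => ?_
    rw [Complex.zero_le_real]
    exact abs_nonneg _
  have hspec : M = W * Matrix.diagonal (fun j => ((hM.eigenvalues j : ℝ) : ℂ)) * Wᴴ := by
    simpa [Matrix.star_eq_conjTranspose, Function.comp_def] using hM.spectral_theorem
  have hS2 : S ^ 2 = Mᴴ * M := by
    rw [pow_two, hM.eq, hSdef, conj_sq]
    conv_rhs => rw [hspec]
    rw [conj_sq]
    have hfun : (fun j => ((|hM.eigenvalues j| : ℝ) : ℂ) * ((|hM.eigenvalues j| : ℝ) : ℂ))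
        = fun j => ((hM.eigenvalues j : ℝ) : ℂ) * ((hM.eigenvalues j : ℝ) : ℂ) := by
      funext j
      rw [← Complex.ofReal_mul, ← Complex.ofReal_mul, abs_mul_abs_self]
    rw [hfun]
  have hsqrt : tdSqrt (M.submatrix e e)
      = S.submatrix e e := by
    symm
    apply tdSqrt_eq_of_sq_eq (hSpsd.submatrix e)
    rw [pow_two, Matrix.submatrix_mul_equiv, Matrix.conjTranspose_submatrix,
      Matrix.submatrix_mul_equiv, ← pow_two, hS2]
  rw [hsqrt]
  have htr : (S.submatrix e e).trace = S.trace := by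
    simp only [Matrix.trace, Matrix.diag, Matrix.submatrix_apply]
    exact e.sum_comp (fun i => S i i)
  have htrS : S.trace = ∑ j, ((|hM.eigenvalues j| : ℝ) : ℂ) := by
    rw [hSdef, Matrix.trace_mul_cycle, hW1, Matrix.one_mul, Matrix.trace_diagonal]
  rw [htr, htrS, Complex.re_sum]
  simp

lemma lhs_bound {N m : ℕ} [DecidableEq ι] (e : Fin N ≃ ι)
    (q : Fin m → ℝ) (hq : ∀ i, 0 ≤ q i)
    (u v : Fin m → ι → ℂ) (hu : ∀ i, star (u i) ⬝ᵥ u i = 1) (hv : ∀ i, star (v i) ⬝ᵥ v i = 1)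
    (M : Matrix ι ι ℂ)
    (hMd : M = ∑ i, (q i : ℂ) •
      (Matrix.vecMulVec (u i) (star (u i)) - Matrix.vecMulVec (v i) (star (v i)))) :
    (1/2 : ℝ) * (tdSqrt (M.submatrix e e)).trace.re
      ≤ ∑ i, q i * Real.sqrt (1 - ‖star (v i) ⬝ᵥ u i‖ ^ 2) := by
  classical
  have hMherm : M.IsHermitian := by
    show Mᴴ = M
    rw [hMd]
    simp only [Matrix.conjTranspose_sum, Matrix.conjTranspose_smul,
      Matrix.conjTranspose_sub, vecMulVec_herm, Complex.star_def, Complex.conj_ofReal]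
  rw [trace_norm_eq M hMherm e]
  set W : Matrix ι ι ℂ := (hMherm.eigenvectorUnitary : Matrix ι ι ℂ) with hWdef
  have hW2 : W * Wᴴ = 1 := by
    rw [← Matrix.star_eq_conjTranspose]
    exact Unitary.coe_mul_star_self hMherm.eigenvectorUnitary
  have hWH : (Wᴴ)ᴴ * Wᴴ = 1 := by rw [Matrix.conjTranspose_conjTranspose, hW2]
  set y : Fin m → ι → ℂ := fun i => Wᴴ *ᵥ u i with hy
  set z : Fin m → ι → ℂ := fun i => Wᴴ *ᵥ v i with hz
  have hD : Matrix.diagonal (RCLike.ofReal ∘ hMherm.eigenvalues) = ∑ i, (q i : ℂ) •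
      (Matrix.vecMulVec (y i) (star (y i)) - Matrix.vecMulVec (z i) (star (z i))) := by
    rw [← hMherm.conjStarAlgAut_star_eigenvectorUnitary, Unitary.conjStarAlgAut_star_apply,
      Matrix.star_eq_conjTranspose, ← hWdef]
    rw [hMd, Matrix.mul_sum, Matrix.sum_mul]
    refine Finset.sum_congr rfl fun i _ => ?_
    rw [Matrix.mul_smul, Matrix.smul_mul]
    congr 1
    rw [Matrix.mul_sub, Matrix.sub_mul]
    congr 1
    · have := outer_conj Wᴴ (u i)
      rw [Matrix.conjTranspose_conjTranspose] at this
      exact this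
    · have := outer_conj Wᴴ (v i)
      rw [Matrix.conjTranspose_conjTranspose] at this
      exact this
  have hμ : ∀ j, hMherm.eigenvalues j
      = ∑ i, q i * (‖y i j‖ ^ 2 - ‖z i j‖ ^ 2) := by
    intro j
    have h := Matrix.ext_iff.mpr hD j j
    simp only [Matrix.diagonal_apply_eq, Function.comp_apply, Matrix.sum_apply,
      Matrix.smul_apply, Matrix.sub_apply, Matrix.vecMulVec_apply, Pi.star_apply,
      smul_eq_mul] at h
    have h2 := congrArg Complex.re h
    rw [Complex.re_sum] at h2
    rw [show (RCLike.ofReal (hMherm.eigenvalues j) : ℂ) = ((hMherm.eigenvalues j : ℝ) : ℂ)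
      from rfl, Complex.ofReal_re] at h2
    rw [h2]
    refine Finset.sum_congr rfl fun i _ => ?_
    have hterm : ((q i : ℝ) : ℂ) * (y i j * star (y i j) - z i j * star (z i j))
        = ((q i * (‖y i j‖ ^ 2 - ‖z i j‖ ^ 2) : ℝ) : ℂ) := by
      simp only [RCLike.star_def, Complex.mul_conj, ← Complex.sq_norm]
      push_cast
      ring
    rw [hterm, Complex.ofReal_re]
  have key : ∀ i, ∑ j, |‖y i j‖ ^ 2 - ‖z i j‖ ^ 2|
      ≤ 2 * Real.sqrt (1 - ‖star (v i) ⬝ᵥ u i‖ ^ 2) := by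
    intro i
    have hy1 : ∑ j, ‖y i j‖ ^ 2 = 1 := by
      rw [dot_self_re]
      show (star (Wᴴ *ᵥ u i) ⬝ᵥ (Wᴴ *ᵥ u i)).re = 1
      rw [unitary_dot hWH, hu i]
      simp
    have hz1 : ∑ j, ‖z i j‖ ^ 2 = 1 := by
      rw [dot_self_re]
      show (star (Wᴴ *ᵥ v i) ⬝ᵥ (Wᴴ *ᵥ v i)).re = 1
      rw [unitary_dot hWH, hv i]
      simp
    have hcle : ‖star (v i) ⬝ᵥ u i‖
        ≤ ∑ j, ‖y i j‖ * ‖z i j‖ := by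
      have h1 : star (z i) ⬝ᵥ y i = star (v i) ⬝ᵥ u i := unitary_dot hWH _ _
      calc ‖star (v i) ⬝ᵥ u i‖ = ‖star (z i) ⬝ᵥ y i‖ := by rw [h1]
        _ ≤ ∑ j, ‖z i j‖ * ‖y i j‖ := cs_abs_dot _ _
        _ = ∑ j, ‖y i j‖ * ‖z i j‖ :=
            Finset.sum_congr rfl fun j _ => mul_comm _ _
    exact pure_bound _ _ (fun j => norm_nonneg _) (fun j => norm_nonneg _)
      hy1 hz1 _ (norm_nonneg _) hcle
  calc (1/2 : ℝ) * ∑ j, |hMherm.eigenvalues j|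
      ≤ (1/2 : ℝ) * ∑ j, ∑ i, q i * |‖y i j‖ ^ 2 - ‖z i j‖ ^ 2| := by
        gcongr with j _
        rw [hμ j]
        refine (Finset.abs_sum_le_sum_abs _ _).trans (le_of_eq ?_)
        refine Finset.sum_congr rfl fun i _ => ?_
        rw [abs_mul, _root_.abs_of_nonneg (hq i)]
    _ = (1/2 : ℝ) * ∑ i, q i * ∑ j, |‖y i j‖ ^ 2 - ‖z i j‖ ^ 2| := by
        rw [Finset.sum_comm]
        congr 1
        exact Finset.sum_congr rfl fun i _ => (Finset.mul_sum _ _ _).symm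
    _ ≤ (1/2 : ℝ) * ∑ i, q i * (2 * Real.sqrt (1 - ‖star (v i) ⬝ᵥ u i‖ ^ 2)) := by
        gcongr with i _
        · exact hq i
        · exact key i
    _ = ∑ i, q i * Real.sqrt (1 - ‖star (v i) ⬝ᵥ u i‖ ^ 2) := by
        rw [Finset.mul_sum]
        exact Finset.sum_congr rfl fun i _ => by ring



variable {ι κ : Type*} [Fintype ι] [Fintype κ]

lemma star_dot (x y : ι → ℂ) : star (star x ⬝ᵥ y) = star y ⬝ᵥ x := by
  simp only [dotProduct, star_sum, star_mul', Pi.star_apply, star_star]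
  exact Finset.sum_congr rfl fun j _ => mul_comm _ _

lemma kron_conjTranspose [DecidableEq ι] [DecidableEq κ] (A : Matrix ι ι ℂ) (B : Matrix κ κ ℂ) :
    (A ⊗ₖ B)ᴴ = Aᴴ ⊗ₖ Bᴴ := by
  ext p r
  simp [Matrix.conjTranspose_apply, Matrix.kroneckerMap_apply, star_mul', mul_comm]


end Stmt17Aux

open Stmt17Aux

private lemma traceDist_sub_eq {N : ℕ} (A B M : Matrix (Fin N) (Fin N) ℂ) (h : A - B = M) :
    traceDist A B
      = (1/2) * (tdSqrt M).trace.re := by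
  subst h; rfl

/-- For a separable state ρ_AB with purification |Ψ⟩_ABC and local unitaries
U_A, V_B: T(U_AρU_A†, ρ) ≤ √(1 − |⟨Ψ|V_B†U_A|Ψ⟩|²). -/
theorem stmt_17 {dA dB dC m : ℕ}
    (q : Fin m → ℝ) (hq : ∀ i, 0 ≤ q i) (hqsum : ∑ i, q i = 1)
    (α : Fin m → Fin dA → ℂ) (β : Fin m → Fin dB → ℂ)
    (hα : ∀ i, star (α i) ⬝ᵥ α i = 1) (hβ : ∀ i, star (β i) ⬝ᵥ β i = 1)
    (ρ : Matrix (Fin dA × Fin dB) (Fin dA × Fin dB) ℂ)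
    (hρ : ρ = ∑ i, ((q i : ℂ) •
      Matrix.vecMulVec (fun p => α i p.1 * β i p.2) (star fun p => α i p.1 * β i p.2)))
    (Ψ : (Fin dA × Fin dB) × Fin dC → ℂ)
    (hΨ : ∀ p p' : Fin dA × Fin dB, ρ p p' = ∑ c, Ψ (p, c) * star (Ψ (p', c)))
    (U : Matrix (Fin dA) (Fin dA) ℂ) (hU : U ∈ Matrix.unitaryGroup (Fin dA) ℂ)
    (V : Matrix (Fin dB) (Fin dB) ℂ) (hV : V ∈ Matrix.unitaryGroup (Fin dB) ℂ)
    (n : ℕ) (hn : n = dA * dB) (toFin : (Fin dA × Fin dB) ≃ Fin n)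
    (UA : Matrix (Fin dA × Fin dB) (Fin dA × Fin dB) ℂ)
    (hUA : UA = U ⊗ₖ (1 : Matrix (Fin dB) (Fin dB) ℂ))
    (UA3 VB3 : Matrix ((Fin dA × Fin dB) × Fin dC) ((Fin dA × Fin dB) × Fin dC) ℂ)
    (hUA3 : UA3 = UA ⊗ₖ (1 : Matrix (Fin dC) (Fin dC) ℂ))
    (hVB3 : VB3 = ((1 : Matrix (Fin dA) (Fin dA) ℂ) ⊗ₖ V) ⊗ₖ (1 : Matrix (Fin dC) (Fin dC) ℂ)) :
    traceDist ((UA * ρ * UAᴴ).submatrix toFin.symm toFin.symm)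
        (ρ.submatrix toFin.symm toFin.symm) ≤
      Real.sqrt (1 - ‖star (VB3 *ᵥ Ψ) ⬝ᵥ (UA3 *ᵥ Ψ)‖ ^ 2) := by
  classical
  set ψ : Fin m → (Fin dA × Fin dB) → ℂ := fun i p => α i p.1 * β i p.2 with hψ
  set VB : Matrix (Fin dA × Fin dB) (Fin dA × Fin dB) ℂ :=
    (1 : Matrix (Fin dA) (Fin dA) ℂ) ⊗ₖ V with hVB
  -- unitarity facts
  have hUunit : Uᴴ * U = 1 := by
    rw [← Matrix.star_eq_conjTranspose]; exact Matrix.mem_unitaryGroup_iff'.mp hU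
  have hVunit : Vᴴ * V = 1 := by
    rw [← Matrix.star_eq_conjTranspose]; exact Matrix.mem_unitaryGroup_iff'.mp hV
  have hUAunit : UAᴴ * UA = 1 := by
    rw [hUA, kron_conjTranspose, Matrix.conjTranspose_one, ← Matrix.mul_kronecker_mul,
      hUunit, Matrix.one_mul, Matrix.one_kronecker_one]
  have hVBunit : VBᴴ * VB = 1 := by
    rw [hVB, kron_conjTranspose, Matrix.conjTranspose_one, ← Matrix.mul_kronecker_mul,
      hVunit, Matrix.one_mul, Matrix.one_kronecker_one]
  -- unit vectors
  have hψunit : ∀ i, star (ψ i) ⬝ᵥ ψ i = 1 := fun i => by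
    rw [hψ]
    rw [dot_factor (α i) (α i) (β i) (β i), hα i, hβ i, one_mul]
  have huunit : ∀ i, star (UA *ᵥ ψ i) ⬝ᵥ (UA *ᵥ ψ i) = 1 := fun i =>
    (unitary_dot hUAunit _ _).trans (hψunit i)
  -- the numbers c i and b i
  set cα : Fin m → ℂ := fun i => star (α i) ⬝ᵥ (U *ᵥ α i) with hcα
  set bV : Fin m → ℂ := fun i => star (β i) ⬝ᵥ (V *ᵥ β i) with hbV
  have hu' : ∀ i, UA *ᵥ ψ i = fun p => (U *ᵥ α i) p.1 * β i p.2 := by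
    intro i
    funext p
    obtain ⟨s, t⟩ := p
    rw [hUA, kron_one_mulVec U (ψ i) s t]
    simp only [Matrix.mulVec, dotProduct, Finset.sum_mul]
    refine Finset.sum_congr rfl fun s' _ => ?_
    show U s s' * ψ i (s', t) = U s s' * α i s' * β i t
    rw [hψ]
    ring
  have hv' : ∀ i, VB *ᵥ ψ i = fun p => α i p.1 * (V *ᵥ β i) p.2 := by
    intro i
    funext p
    obtain ⟨s, t⟩ := p
    rw [hVB, one_kron_mulVec V (ψ i) s t]
    simp only [Matrix.mulVec, dotProduct, Finset.mul_sum]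
    refine Finset.sum_congr rfl fun t' _ => ?_
    show V t t' * ψ i (s, t') = α i s * (V t t' * β i t')
    rw [hψ]
    ring
  have hceq : ∀ i, star (ψ i) ⬝ᵥ (UA *ᵥ ψ i) = cα i := by
    intro i
    rw [hu' i, hψ]
    rw [dot_factor (α i) (U *ᵥ α i) (β i) (β i), hβ i, mul_one]
  have hcabs : ∀ i, ‖cα i‖ ≤ 1 := fun i => by
    rw [← hceq i]; exact abs_dot_le_one _ _ (hψunit i) (huunit i)
  have hbabs : ∀ i, ‖bV i‖ ≤ 1 := fun i => by
    have hVβ : star (V *ᵥ β i) ⬝ᵥ (V *ᵥ β i) = 1 := (unitary_dot hVunit _ _).trans (hβ i)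
    exact abs_dot_le_one _ _ (hβ i) hVβ
  -- decomposition of M := U_A ρ U_A† − ρ
  have hdecomp : UA * ρ * UAᴴ - ρ = ∑ i, (q i : ℂ) •
      (Matrix.vecMulVec (UA *ᵥ ψ i) (star (UA *ᵥ ψ i))
        - Matrix.vecMulVec (ψ i) (star (ψ i))) := by
    rw [hρ, Matrix.mul_sum, Matrix.sum_mul, ← Finset.sum_sub_distrib]
    refine Finset.sum_congr rfl fun i _ => ?_
    rw [Matrix.mul_smul, Matrix.smul_mul, ← smul_sub]
    congr 1
    rw [show (Matrix.vecMulVec (fun p : Fin dA × Fin dB => α i p.1 * β i p.2)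
      (star fun p => α i p.1 * β i p.2)) = Matrix.vecMulVec (ψ i) (star (ψ i)) from rfl]
    rw [outer_conj UA (ψ i)]
  -- LHS bound
  have hLHS : traceDist ((UA * ρ * UAᴴ).submatrix toFin.symm toFin.symm)
      (ρ.submatrix toFin.symm toFin.symm)
      ≤ ∑ i, q i * Real.sqrt (1 - ‖cα i‖ ^ 2) := by
    have hsub : (UA * ρ * UAᴴ).submatrix toFin.symm toFin.symm
        - ρ.submatrix toFin.symm toFin.symm
        = (UA * ρ * UAᴴ - ρ).submatrix toFin.symm toFin.symm := by
      ext p r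
      simp [Matrix.submatrix_apply, Matrix.sub_apply]
    rw [traceDist_sub_eq _ _ _ hsub]
    have := lhs_bound toFin.symm q hq (fun i => UA *ᵥ ψ i) ψ huunit hψunit _ hdecomp
    refine this.trans (le_of_eq ?_)
    exact Finset.sum_congr rfl fun i _ => by rw [hceq i]
  -- RHS inner product identity
  have hρe : ∀ p' p'', ρ p' p'' = ∑ i, (q i : ℂ) * (ψ i p' * star (ψ i p'')) := by
    intro p' p''
    rw [hρ]
    simp [Matrix.sum_apply, Matrix.vecMulVec_apply, hψ]
  have hUA3e : ∀ (p : Fin dA × Fin dB) (cc : Fin dC),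
      (UA3 *ᵥ Ψ) (p, cc) = ∑ p', UA p p' * Ψ (p', cc) := by
    intro p cc
    rw [hUA3]
    exact kron_one_mulVec UA Ψ p cc
  have hVB3e : ∀ (p : Fin dA × Fin dB) (cc : Fin dC),
      (VB3 *ᵥ Ψ) (p, cc) = ∑ p', VB p p' * Ψ (p', cc) := by
    intro p cc
    rw [hVB3, hVB]
    exact kron_one_mulVec _ Ψ p cc
  have stepX : ∀ p : Fin dA × Fin dB,
      (∑ cc : Fin dC, star ((VB3 *ᵥ Ψ) (p, cc)) * (UA3 *ᵥ Ψ) (p, cc))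
      = ∑ p'', ∑ p', star (VB p p'') * UA p p' * ρ p' p'' := by
    intro p
    have e1 : ∀ cc : Fin dC, star ((VB3 *ᵥ Ψ) (p, cc)) * (UA3 *ᵥ Ψ) (p, cc)
        = ∑ p'', ∑ p', star (VB p p'') * UA p p' * (Ψ (p', cc) * star (Ψ (p'', cc))) := by
      intro cc
      rw [hUA3e p cc, hVB3e p cc, star_sum, Finset.sum_mul_sum]
      refine Finset.sum_congr rfl fun p'' _ => Finset.sum_congr rfl fun p' _ => ?_
      rw [star_mul']
      ring
    simp only [e1]
    rw [Finset.sum_comm]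
    refine Finset.sum_congr rfl fun p'' _ => ?_
    rw [Finset.sum_comm]
    refine Finset.sum_congr rfl fun p' _ => ?_
    rw [← Finset.mul_sum, ← hΨ p' p'']
  have stepY : ∀ p : Fin dA × Fin dB,
      (∑ p'', ∑ p', star (VB p p'') * UA p p' * ρ p' p'')
      = ∑ i, (q i : ℂ) * ((UA *ᵥ ψ i) p * star ((VB *ᵥ ψ i) p)) := by
    intro p
    simp only [hρe, Finset.mul_sum]
    refine ((Finset.sum_congr rfl fun p'' _ => Finset.sum_comm).trans Finset.sum_comm).trans ?_
    refine Finset.sum_congr rfl fun i _ => ?_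
    simp only [Matrix.mulVec, dotProduct, star_sum, star_mul', Finset.mul_sum,
      Finset.sum_mul, Pi.star_apply]
    exact Finset.sum_congr rfl fun p'' _ => Finset.sum_congr rfl fun p' _ => by ring
  have stepZ : ∀ i, (∑ p, (UA *ᵥ ψ i) p * star ((VB *ᵥ ψ i) p)) = cα i * star (bV i) := by
    intro i
    have hdot : (∑ p, (UA *ᵥ ψ i) p * star ((VB *ᵥ ψ i) p))
        = star (VB *ᵥ ψ i) ⬝ᵥ (UA *ᵥ ψ i) := by
      simp only [dotProduct, Pi.star_apply]
      exact Finset.sum_congr rfl fun p _ => mul_comm _ _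
    rw [hdot, hu' i, hv' i]
    rw [dot_factor (α i) (U *ᵥ α i) (V *ᵥ β i) (β i)]
    congr 1
    rw [hbV]
    exact (star_dot (β i) (V *ᵥ β i)).symm
  have hinner : star (VB3 *ᵥ Ψ) ⬝ᵥ (UA3 *ᵥ Ψ) = ∑ i, (q i : ℂ) * (cα i * star (bV i)) := by
    calc star (VB3 *ᵥ Ψ) ⬝ᵥ (UA3 *ᵥ Ψ)
        = ∑ p, ∑ cc, star ((VB3 *ᵥ Ψ) (p, cc)) * (UA3 *ᵥ Ψ) (p, cc) := by
          simp [dotProduct, Fintype.sum_prod_type]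
      _ = ∑ p, ∑ p'', ∑ p', star (VB p p'') * UA p p' * ρ p' p'' :=
          Finset.sum_congr rfl fun p _ => stepX p
      _ = ∑ p, ∑ i, (q i : ℂ) * ((UA *ᵥ ψ i) p * star ((VB *ᵥ ψ i) p)) :=
          Finset.sum_congr rfl fun p _ => stepY p
      _ = ∑ i, ∑ p, (q i : ℂ) * ((UA *ᵥ ψ i) p * star ((VB *ᵥ ψ i) p)) := Finset.sum_comm
      _ = ∑ i, (q i : ℂ) * (cα i * star (bV i)) := by
          refine Finset.sum_congr rfl fun i _ => ?_
          rw [← Finset.mul_sum, stepZ i]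
  -- bound |inner| ≤ Σ q|c|
  have ht : ‖star (VB3 *ᵥ Ψ) ⬝ᵥ (UA3 *ᵥ Ψ)‖ ≤ ∑ i, q i * ‖cα i‖ := by
    rw [hinner]
    refine (norm_sum_le _ _).trans (Finset.sum_le_sum fun i _ => ?_)
    rw [norm_mul, norm_mul, Complex.norm_real, Real.norm_eq_abs, _root_.abs_of_nonneg (hq i)]
    have h2 : ‖star (bV i)‖ ≤ 1 := by
      rw [RCLike.star_def, Complex.norm_conj]; exact hbabs i
    nlinarith [hq i, h2, norm_nonneg (cα i), norm_nonneg (star (bV i)),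
      mul_nonneg (hq i) (norm_nonneg (cα i))]
  exact hLHS.trans (jensen_bound q (fun i => ‖cα i‖) hq hqsum
    (fun i => norm_nonneg _) hcabs _ (norm_nonneg _) ht)
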